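/- Let Λ = Λ₀ ⊕ M where Λ₀ is even unimodular containing a hyperbolic plane and M has Gram matrix [[−6,3],[3,−2]] in basis u, v (the OG₁₀ lattice). Let n ≥ 1. There exists a primitive h ∈ Λ with h² = 2n and div(h) = 3 if and only if n ≡ 6 (mod 9). -/

import Mathlib

/-- Proposition 3.6 (OG₁₀ case): in `Λ = Λ₀ ⊕ M` with `Λ₀` even unimodular containing
a hyperbolic plane and `M` of Gram matrix `[[−6,3],[3,−2]]` in the basis `u, v`, there
exists a primitive `h` with `h² = 2n` and `div(h) = 3` iff `n ≡ 6 (mod 9)`.  `Λ` is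
modelled as `Λ₀ × ℤ × ℤ` and divisibility via the ideal of pairing values. -/
theorem stmt_15 (Λ₀ : Type) [AddCommGroup Λ₀] [Module ℤ Λ₀]
    [Module.Free ℤ Λ₀] [Module.Finite ℤ Λ₀]
    (B : Λ₀ →ₗ[ℤ] Λ₀ →ₗ[ℤ] ℤ)
    (hsymm : ∀ x y, B x y = B y x)
    (heven : ∀ x, 2 ∣ B x x)
    (hunimod : Function.Bijective fun x => B x)
    (e f : Λ₀) (he : B e e = 0) (hf : B f f = 0) (hef : B e f = 1)
    (Bl : Λ₀ × ℤ × ℤ → Λ₀ × ℤ × ℤ → ℤ)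
    (hBl : ∀ w z, Bl w z = B w.1 z.1 - 6 * (w.2.1 * z.2.1) + 3 * (w.2.1 * z.2.2)
      + 3 * (w.2.2 * z.2.1) - 2 * (w.2.2 * z.2.2))
    (n : ℕ) (hn : 1 ≤ n) :
    (∃ h : Λ₀ × ℤ × ℤ,
        (∀ (c : ℤ) (w : Λ₀ × ℤ × ℤ), h = c • w → IsUnit c) ∧
        Bl h h = 2 * n ∧
        (∀ t : ℤ, ((3 : ℤ) ∣ t ↔ ∃ w, Bl h w = t))) ↔
      n % 9 = 6 := by
  have hsm1 : ∀ (c : ℤ) (x y : Λ₀), B (c • x) y = c * B x y := by intro c x y; simp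
  have hsm2 : ∀ (c : ℤ) (x y : Λ₀), B x (c • y) = c * B x y := by intro c x y; simp
  constructor
  · rintro ⟨⟨X, p, Q⟩, hprim, hsq, hdiv⟩
    have hval : ∀ w, (3:ℤ) ∣ Bl (X, p, Q) w := fun w => (hdiv _).2 ⟨w, rfl⟩
    have h3 : ∀ y, (3:ℤ) ∣ B X y := by
      intro y
      have := hval (y, 0, 0)
      rw [hBl] at this
      simpa using this
    have hQ3 : ∃ q, Q = 3 * q := by
      have h1 : (3:ℤ) ∣ 3 * p - 2 * Q := by
        have := hval (0, 0, 1)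
        rw [hBl] at this
        simpa using this
      obtain ⟨s, hs⟩ := h1
      exact ⟨Q / 3, by omega⟩
    obtain ⟨q, hq⟩ := hQ3
    subst hq
    let φ : Λ₀ →ₗ[ℤ] ℤ :=
      { toFun := fun y => B X y / 3
        map_add' := by
          intro a b
          obtain ⟨u, hu⟩ := h3 a
          obtain ⟨v, hv⟩ := h3 b
          simp only [map_add]
          omega
        map_smul' := by
          intro c a
          obtain ⟨u, hu⟩ := h3 a
          simp only [map_smul, smul_eq_mul, RingHom.id_apply, hu]
          rw [show c * (3 * u) = 3 * (c * u) by ring,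
            Int.mul_ediv_cancel_left _ (by norm_num),
            Int.mul_ediv_cancel_left _ (by norm_num)] }
    obtain ⟨X₀, hX₀⟩ := hunimod.2 φ
    have hφ : ∀ y, B X y = 3 * B X₀ y := by
      intro y
      obtain ⟨u, hu⟩ := h3 y
      have h1 : B X₀ y = B X y / 3 := by
        rw [show (B X₀) = φ from hX₀]; rfl
      rw [h1]; omega
    have hX : X = (3:ℤ) • X₀ := by
      apply hunimod.1
      show B X = B ((3:ℤ) • X₀)
      ext y
      rw [hφ y, hsm1]
    obtain ⟨d, hd⟩ := heven X₀
    have hBXX : B X X = 18 * d := by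
      rw [hφ X, hsymm X₀ X, hφ X₀, hd]; ring
    rw [hBl] at hsq
    simp only at hsq
    have hp3 : ¬ (3:ℤ) ∣ p := by
      rintro ⟨p', hp'⟩
      have hcw : (X, p, 3 * q) = (3:ℤ) • (X₀, p', q) := by
        rw [Prod.ext_iff, Prod.ext_iff]
        refine ⟨hX, ?_, ?_⟩ <;> simp [hp', smul_eq_mul]
      have := hprim 3 (X₀, p', q) hcw
      rw [Int.isUnit_iff] at this
      omega
    have heq2 : 2 * (n:ℤ) = 18 * d - 6 * (p * p) + 18 * (p * q) - 18 * (q * q) := by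
      rw [hBXX] at hsq
      linear_combination -hsq
    have key : ∃ m : ℤ, 2 * (n:ℤ) = 18 * m + 12 := by
      obtain ⟨k, hk | hk⟩ : ∃ k : ℤ, p = 3 * k + 1 ∨ p = 3 * k + 2 := ⟨p / 3, by omega⟩
      · exact ⟨d - 3*k^2 - 2*k - 1 + 3*k*q + q - q^2, by subst hk; linear_combination heq2⟩
      · exact ⟨d - 3*k^2 - 4*k - 2 + 3*k*q + 2*q - q^2, by subst hk; linear_combination heq2⟩
    obtain ⟨m, hm⟩ := key
    omega
  · intro hn9
    obtain ⟨m, hm⟩ : ∃ m : ℕ, n = 9 * m + 6 := ⟨n / 9, by omega⟩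
    refine ⟨(((3 * m + 3 : ℤ)) • e + (3:ℤ) • f, 1, 0), ?_, ?_, ?_⟩
    · rintro c ⟨w, a, b⟩ hcw
      have h2 : (1:ℤ) = c * a := congrArg (fun z => z.2.1) hcw
      exact IsUnit.of_mul_eq_one (a := c) a h2.symm
    · rw [hBl]
      simp only [map_add, LinearMap.add_apply, hsm1, hsm2, he, hf, hef, hsymm f e]
      push_cast [hm]
      ring
    · intro t
      constructor
      · rintro ⟨s, rfl⟩
        refine ⟨(0, 0, s), ?_⟩
        rw [hBl]
        simp
      · rintro ⟨⟨y, cc, dd⟩, rfl⟩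
        rw [hBl]
        simp only [map_add, LinearMap.add_apply, hsm1]
        exact ⟨(m + 1) * B e y + B f y - 2 * cc + dd, by push_cast; ring⟩
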